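/- Let k be a field, n ≥ 1, and let f ∈ k[x₀,…,x_n] be homogeneous of degree d with d ≠ 0 in k. Write fᵢ = ∂f/∂xᵢ and g_♭ for the dehomogenization of g at x₀ = 1. Then for every point p = (a₁,…,a_n) ∈ kⁿ with maximal ideal m_p = (x₁−a₁,…,x_n−a_n) ⊆ k[x₁,…,x_n], the length of the localization at m_p of k[x₁,…,x_n]/((f₀)_♭,…,(f_n)_♭) equals the length of the localization at m_p of k[x₁,…,x_n]/(f_♭, ∂f_♭/∂x₁,…, ∂f_♭/∂x_n). (That is, τ(Z,z) = τ_f(Z,z) for every point z of the chart x₀ ≠ 0, where Z is the scheme defined by the jacobian ideal of f.) -/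

import Mathlib

open MvPolynomial

set_option synthInstance.maxHeartbeats 1000000
set_option maxHeartbeats 1000000

/-- The length of a module: the Krull dimension of its lattice of submodules
(for a module of finite length this is the common length of all composition
series, by Jordan–Hölder). -/
noncomputable def moduleLength (R M : Type*) [Semiring R] [AddCommMonoid M]
    [Module R M] : WithBot ℕ∞ :=
  Order.krullDim (Submodule R M)

/-- Dehomogenization at `x₀ = 1`: the `k`-algebra map
`k[x₀,…,xₙ] → k[x₁,…,xₙ]` sending `x₀ ↦ 1` and `xᵢ ↦ xᵢ` for `1 ≤ i ≤ n`. -/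
noncomputable def dehom (k : Type*) [CommSemiring k] (n : ℕ) :
    MvPolynomial (Fin (n + 1)) k →ₐ[k] MvPolynomial (Fin n) k :=
  aeval (Fin.cases (1 : MvPolynomial (Fin n) k) X)


lemma euler_monomial {σ : Type*} [Fintype σ] [DecidableEq σ] {R : Type*} [CommRing R]
    (s : σ →₀ ℕ) (a : R) :
    ∑ i : σ, X i * pderiv i (monomial s a) = (∑ i : σ, s i) • monomial s a := by
  rw [Finset.sum_smul]
  refine Finset.sum_congr rfl fun i _ => ?_
  rw [pderiv_monomial]
  rcases Nat.eq_zero_or_pos (s i) with h | h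
  · simp [h]
  · have : s - Finsupp.single i 1 + Finsupp.single i 1 = s := by
      ext j
      rcases eq_or_ne j i with rfl | hj
      · simp [Nat.sub_add_cancel h]
      · simp [Finsupp.single_apply, hj.symm]
    calc X i * monomial (s - Finsupp.single i 1) (a * (s i : R))
        = monomial (s - Finsupp.single i 1 + Finsupp.single i 1) (a * (s i : R)) := by
          rw [add_comm, monomial_single_add, pow_one]
      _ = s i • monomial s a := by
          rw [this, ← Nat.cast_smul_eq_nsmul R, smul_monomial, smul_eq_mul, mul_comm]

lemma euler {σ : Type*} [Fintype σ] [DecidableEq σ] {R : Type*} [CommRing R] {d : ℕ}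
    {f : MvPolynomial σ R} (hf : f.IsHomogeneous d) :
    ∑ i : σ, X i * pderiv i f = d • f := by
  conv_lhs => rw [f.as_sum]
  conv_rhs => rw [f.as_sum]
  simp_rw [map_sum, Finset.mul_sum, Finset.smul_sum]
  rw [Finset.sum_comm]
  refine Finset.sum_congr rfl fun s hs => ?_
  rw [euler_monomial]
  congr 1
  have := hf (mem_support_iff.1 hs)
  erw [← Finsupp.degree_eq_weight_one] at this
  rw [← this, Finsupp.degree]
  exact (Finset.sum_subset (Finset.subset_univ _) (by simp +contextual)).symm


lemma pderiv_dehom {k : Type*} [CommRing k] {n : ℕ} (j : Fin n)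
    (g : MvPolynomial (Fin (n + 1)) k) :
    pderiv j (dehom k n g) = dehom k n (pderiv j.succ g) := by
  induction g using MvPolynomial.induction_on with
  | C a => simp [dehom]
  | add p q hp hq => simp [map_add, hp, hq]
  | mul_X p i hp =>
    rw [map_mul, pderiv_mul, pderiv_mul, map_add, map_mul, map_mul, hp]
    congr 1
    congr 1
    induction i using Fin.cases with
    | zero =>
      simp [dehom, Pi.single_eq_of_ne (Fin.succ_ne_zero j).symm]
    | succ m =>
      rcases eq_or_ne j m with rfl | hjm
      · simp [dehom]
      · have h1 : m.succ ≠ j.succ := fun h => hjm (Fin.succ_injective n h).symm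
        simp [dehom, Pi.single_eq_of_ne h1, Pi.single_eq_of_ne hjm.symm]

lemma J_eq {k : Type*} [Field k] {n : ℕ} {d : ℕ} (hd : (d : k) ≠ 0)
    {f : MvPolynomial (Fin (n + 1)) k} (hf : f.IsHomogeneous d) :
    Ideal.span (Set.range fun i : Fin (n + 1) => dehom k n (pderiv i f))
      = Ideal.span (insert (dehom k n f)
          (Set.range fun i : Fin n => pderiv i (dehom k n f))) := by
  set F := dehom k n f with hF
  have key : dehom k n (pderiv 0 f) + ∑ j : Fin n, X j * pderiv j F = C (d : k) * F := by
    have e := euler hf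
    have := congrArg (dehom k n) e
    rw [map_sum, map_nsmul] at this
    rw [Fin.sum_univ_succ] at this
    simp only [map_mul] at this
    have h0 : dehom k n (X (0 : Fin (n + 1))) = 1 := by simp [dehom]
    have hsucc : ∀ j : Fin n, dehom k n (X j.succ) = X j := by intro j; simp [dehom]
    rw [h0, one_mul] at this
    calc dehom k n (pderiv 0 f) + ∑ j : Fin n, X j * pderiv j F
        = dehom k n (pderiv 0 f)
            + ∑ j : Fin n, dehom k n (X j.succ) * dehom k n (pderiv j.succ f) := by
          congr 1
          exact Finset.sum_congr rfl fun j _ => by rw [hsucc, pderiv_dehom]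
      _ = d • F := this
      _ = C (d : k) * F := by rw [← Nat.cast_smul_eq_nsmul k, smul_eq_C_mul]
  apply le_antisymm
  · rw [Ideal.span_le]
    rintro _ ⟨i, rfl⟩
    simp only
    induction i using Fin.cases with
    | zero =>
      have : dehom k n (pderiv 0 f)
          = C (d : k) * F - ∑ j : Fin n, X j * pderiv j F := by
        rw [← key]; ring
      rw [this]
      refine sub_mem (Ideal.mul_mem_left _ _ ?_) (Ideal.sum_mem _ fun j _ =>
        Ideal.mul_mem_left _ _ ?_)
      · exact Ideal.subset_span (Set.mem_insert _ _)
      · exact Ideal.subset_span (Set.mem_insert_of_mem _ ⟨j, rfl⟩)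
    | succ j =>
      rw [← pderiv_dehom, ← hF]
      exact Ideal.subset_span (Set.mem_insert_of_mem _ ⟨j, rfl⟩)
  · rw [Ideal.span_le]
    rintro x hx
    rcases hx with rfl | ⟨j, rfl⟩
    · have : F = C ((d : k)⁻¹) * (dehom k n (pderiv 0 f) + ∑ j : Fin n, X j * pderiv j F) := by
        rw [key, ← mul_assoc, ← C_mul, inv_mul_cancel₀ hd, C_1, one_mul]
      rw [this]
      refine Ideal.mul_mem_left _ _ (add_mem ?_ (Ideal.sum_mem _ fun j _ =>
        Ideal.mul_mem_left _ _ ?_))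
      · exact Ideal.subset_span ⟨0, rfl⟩
      · rw [pderiv_dehom]; exact Ideal.subset_span ⟨j.succ, rfl⟩
    · show pderiv j F ∈ _
      rw [hF, pderiv_dehom]
      exact Ideal.subset_span ⟨j.succ, rfl⟩

/-- **τ(Z,z) = τ_f(Z,z)**: for `f` homogeneous of degree `d` with `d ≠ 0` in `k` and
every point `p ∈ kⁿ` with maximal ideal `m_p = (x₁-a₁,…,xₙ-aₙ)`, the localization at
`m_p` of `k[x₁,…,xₙ]/((f₀)♭,…,(fₙ)♭)` and the localization at `m_p` of
`k[x₁,…,xₙ]/(f♭, ∂f♭/∂x₁,…,∂f♭/∂xₙ)` have the same length as modules over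
themselves. -/
theorem stmt9 (k : Type*) [Field k] (n : ℕ) (hn : 1 ≤ n) (d : ℕ)
    (hd : (d : k) ≠ 0)
    (f : MvPolynomial (Fin (n + 1)) k) (hf : f.IsHomogeneous d)
    (p : Fin n → k)
    (mp : Ideal (MvPolynomial (Fin n) k))
    (hmp : mp = Ideal.span (Set.range fun i : Fin n => X i - C (p i)))
    (hmax : mp.IsMaximal)
    (J₁ J₂ : Ideal (MvPolynomial (Fin n) k))
    (hJ₁ : J₁ = Ideal.span
      (Set.range fun i : Fin (n + 1) => dehom k n (pderiv i f)))
    (hJ₂ : J₂ = Ideal.span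
      (insert (dehom k n f)
        (Set.range fun i : Fin n => pderiv i (dehom k n f)))) :
    moduleLength
        (Localization
          (Submonoid.map (Ideal.Quotient.mk J₁) (@Ideal.primeCompl _ _ mp hmax.isPrime)))
        (Localization
          (Submonoid.map (Ideal.Quotient.mk J₁) (@Ideal.primeCompl _ _ mp hmax.isPrime)))
      = moduleLength
        (Localization
          (Submonoid.map (Ideal.Quotient.mk J₂) (@Ideal.primeCompl _ _ mp hmax.isPrime)))
        (Localization
          (Submonoid.map (Ideal.Quotient.mk J₂) (@Ideal.primeCompl _ _ mp hmax.isPrime))) := by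
  have hJ : J₁ = J₂ := by
    rw [hJ₁, hJ₂]; exact J_eq hd hf
  rw [hJ]
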